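/- arXiv:1505.04596 — 6 statements merged into one kernel-verified Lean document; each statement's English description precedes it below -/
import Mathlib

section
/- Let A be a small category, E a reflective subcategory of presheaves on A through which the Yoneda embedding factors via Z : A → E, and F : A → C a functor into a cocomplete category. Then the left Kan extension of F along Z is isomorphic to the composite of the left Kan extension of F along the Yoneda embedding with the inclusion I : E → PSh(A). -/
open CategoryTheory CategoryTheory.Limits

universe u v u'

/-- Let `E` be a reflective subcategory of presheaves on a small category `A` through
which the Yoneda embedding factors via `Z : A ⥤ E`, and `F : A ⥤ C` a functor into a
cocomplete category.  If `L` is a left Kan extension of `F` along the Yoneda embedding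
(witnessed by `β`), then the composite `i ⋙ L` of `L` with the inclusion `i : E ⥤ PSh A`
is a left Kan extension of `F` along `Z`. -/
theorem lan_along_Z_iso_lan_yoneda_comp_inclusion
    {A : Type u} [SmallCategory A] {E : Type u'} [Category.{v} E]
    (i : E ⥤ (Aᵒᵖ ⥤ Type u)) [Reflective i]
    (Z : A ⥤ E) (hZ : Z ⋙ i ≅ yoneda)
    {C : Type*} [Category C] [HasColimits C]
    (F : A ⥤ C) (L : (Aᵒᵖ ⥤ Type u) ⥤ C) (β : F ⟶ yoneda ⋙ L)
    [L.IsLeftKanExtension β] :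
    ∃ α : F ⟶ Z ⋙ (i ⋙ L), (i ⋙ L).IsLeftKanExtension α := by
  classical
  set R := reflector i with hR
  set adj := reflectorAdjunction i with hadj
  -- the natural iso `yoneda ⋙ R ≅ Z`
  let e : yoneda ⋙ R ≅ Z :=
    Functor.isoWhiskerRight hZ.symm R ≪≫ Functor.associator Z i R ≪≫
      Functor.isoWhiskerLeft Z (asIso adj.counit) ≪≫ Z.rightUnitor
  have he : ∀ a : A, e.hom.app a = R.map (hZ.inv.app a) ≫ adj.counit.app (Z.obj a) := by
    intro a
    simp [e]
  -- the candidate unit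
  let α : F ⟶ Z ⋙ (i ⋙ L) := β ≫ Functor.whiskerRight hZ.inv L
  have hα : ∀ a : A, α.app a = β.app a ≫ L.map (hZ.inv.app a) := fun a => rfl
  -- the key transported transformation
  have key : ∀ (G : E ⥤ C) (φ : i ⋙ L ⟶ G),
      ∃ ψ : L ⟶ R ⋙ G,
        (∀ P, ψ.app P = L.map (adj.unit.app P) ≫ φ.app (R.obj P)) := by
    intro G φ
    refine ⟨{ app := fun P => L.map (adj.unit.app P) ≫ φ.app (R.obj P)
              naturality := ?_ }, fun P => rfl⟩
    intro P Q f
    have h1 := φ.naturality (R.map f)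
    dsimp at h1 ⊢
    have h2 : f ≫ adj.unit.app Q = adj.unit.app P ≫ i.map (R.map f) := by
      exact adj.unit.naturality f
    rw [← Category.assoc, ← L.map_comp, h2, L.map_comp, Category.assoc, h1,
      Category.assoc]
  -- recovery of φ from ψ
  have recov : ∀ (G : E ⥤ C) (φ : i ⋙ L ⟶ G) (x : E),
      φ.app x = L.map (adj.unit.app (i.obj x)) ≫ φ.app (R.obj (i.obj x)) ≫
        G.map (adj.counit.app x) := by
    intro G φ x
    have h1 := φ.naturality (adj.counit.app x)
    dsimp at h1
    rw [← h1, ← Category.assoc, ← L.map_comp, adj.right_triangle_components]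
    simp
  -- the unit/e compatibility
  have hcompat : ∀ a : A, adj.unit.app (yoneda.obj a) ≫ i.map (e.hom.app a) =
      hZ.inv.app a := by
    intro a
    rw [he a, i.map_comp, ← Category.assoc]
    have h2 : adj.unit.app (yoneda.obj a) ≫ i.map (R.map (hZ.inv.app a)) =
        hZ.inv.app a ≫ adj.unit.app (i.obj (Z.obj a)) := by
      exact (adj.unit.naturality (hZ.inv.app a)).symm
    rw [h2, Category.assoc, adj.right_triangle_components]
    simp
  -- the key fac property of ψ
  have keyfac : ∀ (G : E ⥤ C) (γ : F ⟶ Z ⋙ G) (φ : i ⋙ L ⟶ G)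
      (hφ : α ≫ Functor.whiskerLeft Z φ = γ) (ψ : L ⟶ R ⋙ G)
      (hψ : ∀ P, ψ.app P = L.map (adj.unit.app P) ≫ φ.app (R.obj P)) (a : A),
      β.app a ≫ ψ.app (yoneda.obj a) = γ.app a ≫ G.map (e.inv.app a) := by
    intro G γ φ hφ ψ hψ a
    have hγa : γ.app a = β.app a ≫ L.map (hZ.inv.app a) ≫ φ.app (Z.obj a) := by
      rw [← hφ]; simp [hα a]
    have h1 := φ.naturality (e.hom.app a)
    dsimp at h1
    have h3 : φ.app (R.obj (yoneda.obj a)) =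
        L.map (i.map (e.hom.app a)) ≫ φ.app (Z.obj a) ≫ G.map (e.inv.app a) := by
      rw [← Category.assoc, h1, Category.assoc, ← G.map_comp, e.hom_inv_id_app]
      simp
    rw [hψ, h3, hγa]
    simp only [Category.assoc]
    rw [← L.map_comp_assoc, hcompat a]
  refine ⟨α, ⟨⟨IsInitial.ofUniqueHom (fun 𝒢 => ?_) (fun 𝒢 m => ?_)⟩⟩⟩
  all_goals
    set G := 𝒢.right with hG
    set γ : F ⟶ Z ⋙ G := 𝒢.hom with hγ
    let γ' : F ⟶ yoneda ⋙ (R ⋙ G) := γ ≫ Functor.whiskerRight e.inv G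
    have hγ' : ∀ a : A, γ'.app a = γ.app a ≫ G.map (e.inv.app a) := fun a => rfl
    set d : L ⟶ R ⋙ G := L.descOfIsLeftKanExtension β (R ⋙ G) γ' with hd
    have hdfac : ∀ a : A, β.app a ≫ d.app (yoneda.obj a) = γ'.app a := fun a =>
      L.descOfIsLeftKanExtension_fac_app β (R ⋙ G) γ' a
    let φ₀ : i ⋙ L ⟶ G :=
      { app := fun x => d.app (i.obj x) ≫ G.map (adj.counit.app x)
        naturality := by
          intro x y f
          have h1 := d.naturality (i.map f)
          have h2 : R.map (i.map f) ≫ adj.counit.app y = adj.counit.app x ≫ f := by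
            simpa using adj.counit.naturality f
          dsimp at h1 ⊢
          rw [← Category.assoc, h1, Category.assoc, ← G.map_comp, h2,
            G.map_comp, Category.assoc] }
    have hφ₀fac : α ≫ Functor.whiskerLeft Z φ₀ = γ := by
      ext a
      have h1 := d.naturality (hZ.inv.app a)
      dsimp at h1
      dsimp [φ₀]
      rw [hα a]
      simp only [Category.assoc]
      rw [reassoc_of% h1, reassoc_of% (hdfac a), hγ' a, Category.assoc,
        ← G.map_comp, ← he a, ← G.map_comp, e.inv_hom_id_app, G.map_id]
      exact Category.comp_id _
  · exact StructuredArrow.homMk φ₀ hφ₀fac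
  · -- uniqueness
    have hφ : α ≫ Functor.whiskerLeft Z m.right = γ := by exact StructuredArrow.w m
    obtain ⟨ψ, hψ⟩ := key G m.right
    have hψd : ψ = d := by
      apply L.hom_ext_of_isLeftKanExtension β
      ext a
      dsimp
      rw [keyfac G γ m.right hφ ψ hψ a, ← hγ' a, hdfac a]
    ext x
    have := recov G m.right x
    dsimp
    rw [this, ← Category.assoc, ← hψ (i.obj x), hψd]
    rfl
end

section
/- Let A be a small category, E a reflective subcategory of PSh(A) containing the representables, with corestricted Yoneda embedding Z : A → E, and let L : E → C be a left adjoint functor into a cocomplete category. Then L ∘ R is isomorphic to the left Kan extension of L ∘ Z along the Yoneda embedding, where R is the reflection. -/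
open CategoryTheory CategoryTheory.Limits

universe u v u'

open CategoryTheory.Presheaf in
/-- A universe-polymorphic version of `Presheaf.isLeftKanExtension_of_preservesColimits`:
if `L : PSh(B) ⥤ ℰ` preserves colimits and restricts along yoneda to (an iso copy of) `F`,
then `L` is a left Kan extension of `F` along yoneda. -/
lemma isLeftKanExtension_of_preservesColimits_aux
    {B : Type u} [SmallCategory B] {ℰ : Type*} [Category ℰ]
    (L : (Bᵒᵖ ⥤ Type u) ⥤ ℰ) (F : B ⥤ ℰ) (e : F ≅ yoneda ⋙ L)
    [PreservesColimitsOfSize.{u, u} L] :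
    L.IsLeftKanExtension e.hom := by
  apply Functor.LeftExtension.IsPointwiseLeftKanExtension.isLeftKanExtension
    (E := Functor.LeftExtension.mk _ e.hom)
  intro P
  dsimp [Functor.LeftExtension.IsPointwiseLeftKanExtensionAt]
  apply IsColimit.ofWhiskerEquivalence (CategoryOfElements.costructuredArrowYonedaEquivalence _)
  let e' : CategoryOfElements.toCostructuredArrow P ⋙ CostructuredArrow.proj yoneda P ⋙ F ≅
      functorToRepresentables P ⋙ L :=
    Functor.isoWhiskerLeft _ (Functor.isoWhiskerLeft _ e) ≪≫
      Functor.isoWhiskerLeft _ (Functor.associator _ _ _).symm ≪≫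
      (Functor.associator _ _ _).symm ≪≫ Functor.isoWhiskerRight (Functor.isoWhiskerLeft (CategoryOfElements.π P).leftOp uliftYonedaIsoYoneda.symm :
        _ ≅ functorToRepresentables P) L
  apply (IsColimit.precomposeHomEquiv e'.symm _).1
  exact IsColimit.ofIsoColimit (isColimitOfPreserves L (colimitOfRepresentable P))
    (Cocones.ext (Iso.refl _) (by
      intro j
      change L.map (uliftYonedaEquiv.symm (Opposite.unop j).2) ≫ 𝟙 _ =
        (((L.map (uliftYonedaIsoYoneda.{u}.hom.app (Opposite.unop j).1.unop) ≫ 𝟙 _) ≫ 𝟙 _) ≫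
          e.inv.app (Opposite.unop j).1.unop) ≫ e.hom.app (Opposite.unop j).1.unop ≫
        L.map (yonedaEquiv.symm (Opposite.unop j).2)
      simp only [Category.comp_id, Category.assoc, Iso.inv_hom_id_app_assoc, ← Functor.map_comp]
      congr 1))

/-- Let `E` be a reflective subcategory of presheaves on a small category `A`, containing
the representables via the corestricted Yoneda embedding `Z : A ⥤ E`, and let `L : E ⥤ C`
be a left adjoint into a cocomplete category.  Then `reflector i ⋙ L` (that is, `L ∘ R`)
is a left Kan extension of `Z ⋙ L` (that is, `L ∘ Z`) along the Yoneda embedding. -/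
theorem leftAdjoint_comp_reflector_isLeftKanExtension
    {A : Type u} [SmallCategory A] {E : Type u'} [Category.{v} E]
    (i : E ⥤ (Aᵒᵖ ⥤ Type u)) [Reflective i]
    (Z : A ⥤ E) (hZ : Z ⋙ i ≅ yoneda)
    {C : Type*} [Category C] [HasColimits C]
    (L : E ⥤ C) [L.IsLeftAdjoint] :
    ∃ α : (Z ⋙ L) ⟶ yoneda ⋙ (reflector i ⋙ L),
      (reflector i ⋙ L).IsLeftKanExtension α := by
  have hcounit : Z ≅ yoneda ⋙ reflector i :=
    (Functor.rightUnitor Z).symm ≪≫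
      Functor.isoWhiskerLeft Z (asIso ((reflectorAdjunction i).counit)).symm ≪≫
      (Functor.associator _ _ _).symm ≪≫
      Functor.isoWhiskerRight hZ (reflector i)
  let e : (Z ⋙ L) ≅ yoneda ⋙ (reflector i ⋙ L) :=
    Functor.isoWhiskerRight hcounit L ≪≫ Functor.associator _ _ _
  exact ⟨e.hom, isLeftKanExtension_of_preservesColimits_aux (reflector i ⋙ L) _ e⟩
end

section
/- Let C be a symmetric monoidal closed abelian category with exact filtered colimits, and let A be a commutative algebra object in C that can be written as a filtered colimit of objects A_i admitting duals, via morphisms f_i : A_i → A, with compatible morphisms η_i : 𝟙 → A_i lifting the unit η : 𝟙 → A, such that each dual morphism η_i^∨ : A_i^∨ → 𝟙 is an epimorphism. Then A is faithfully flat: the functor A ⊗ − is exact and A ⊗ X ≅ 0 implies X ≅ 0. -/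
open CategoryTheory CategoryTheory.Limits MonoidalCategory

universe w v u

/-- The data of a filtered diagram of objects under the unit, with a cocone on an
object `A` and a compatible family of unit factorizations `η j : 𝟙_ C ⟶ D j`,
as in the definition of an Adams algebra. -/
structure AdamsDiagram (C : Type u) [Category.{v} C] [MonoidalCategory C]
    (A : C) (unit : 𝟙_ C ⟶ A) where
  J : Type w
  [cat : SmallCategory J]
  [filt : IsFiltered J]
  D : J ⥤ C
  η : ∀ j, 𝟙_ C ⟶ D.obj j
  ι : ∀ j, D.obj j ⟶ A
  ι_nat : ∀ {j j'} (f : j ⟶ j'), D.map f ≫ ι j' = ι j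
  η_nat : ∀ {j j'} (f : j ⟶ j'), η j ≫ D.map f = η j'
  η_unit : ∀ j, η j ≫ ι j = unit

attribute [instance] AdamsDiagram.cat AdamsDiagram.filt

namespace AdamsDiagram

variable {C : Type u} [Category.{v} C] [MonoidalCategory C] {A : C} {unit : 𝟙_ C ⟶ A}

/-- The cocone on `A` determined by an `AdamsDiagram`. -/
@[simps] def cocone (P : AdamsDiagram.{w} C A unit) : Cocone P.D where
  pt := A
  ι :=
    { app := fun j => P.ι j
      naturality := by intro j j' f; simpa using P.ι_nat f }

/-- The conditions exhibiting `A` as an Adams algebra: every object of the diagram has a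
(right) dual, the cocone is a colimit cocone, and the dual of each unit factorization
`η j` is an epimorphism. -/
def IsAdams (P : AdamsDiagram.{w} C A unit) : Prop :=
  (∀ j, Nonempty (HasRightDual (P.D.obj j))) ∧
  Nonempty (IsColimit P.cocone) ∧
  ∀ (j : P.J) (h : HasRightDual (P.D.obj j)),
    letI := h
    Epi ((P.η j)ᘁ)

end AdamsDiagram

section AuxConst

variable {C : Type u} [Category.{v} C]

/-- The constant cocone on a constant functor. -/
@[simps] def myConstCocone (J : Type w) [SmallCategory J] (X : C) :
    Cocone ((Functor.const J).obj X) where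
  pt := X
  ι := { app := fun _ => 𝟙 X }

/-- Over a filtered index category, the constant cocone is a colimit cocone. -/
noncomputable def myConstCoconeIsColimit (J : Type w) [SmallCategory J] [IsFiltered J] (X : C) :
    IsColimit (myConstCocone J X) := by
  have key : ∀ (s : Cocone ((Functor.const J).obj X)) (j j' : J), s.ι.app j = s.ι.app j' := by
    intro s j j'
    have h1 := s.w (IsFiltered.leftToMax j j')
    have h2 := s.w (IsFiltered.rightToMax j j')
    simp only [Functor.const_obj_map, Category.id_comp] at h1 h2
    rw [← h1, ← h2]
  exact
  { desc := fun s => s.ι.app (IsFiltered.nonempty.some)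
    fac := fun s j => by
      simpa [myConstCocone] using key s _ j
    uniq := fun s m hm => by
      have := hm (IsFiltered.nonempty.some)
      exact (Category.id_comp m).symm.trans this }

end AuxConst

section AuxAb

variable {C : Type u} [Category.{v} C] [Abelian C] [HasColimits C] [AB5 C]

/-- In an AB5 abelian category, a morphism between the points of two filtered colimit
cocones which is compatible with a levelwise monomorphism is a monomorphism. -/
lemma mono_of_isColimit_of_mono {J : Type v} [SmallCategory J] [IsFiltered J]
    {F G : J ⥤ C} (α : F ⟶ G) (hα : ∀ j, Mono (α.app j))
    {cF : Cocone F} {cG : Cocone G} (hF : IsColimit cF) (hG : IsColimit cG)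
    (m : cF.pt ⟶ cG.pt) (hm : ∀ j, cF.ι.app j ≫ m = α.app j ≫ cG.ι.app j) :
    Mono m := by
  haveI : ∀ j, Mono (α.app j) := hα
  haveI : Mono α := NatTrans.mono_of_mono_app α
  haveI : PreservesFiniteLimits (colim (J := J) (C := C)) := (AB5OfSize.ofShape J).preservesFiniteLimits
  haveI hmono : Mono (colim.map α) := preserves_mono_of_preservesLimit colim α
  have hiso : m = (hF.coconePointUniqueUpToIso (colimit.isColimit F)).hom ≫ colim.map α ≫
      (hG.coconePointUniqueUpToIso (colimit.isColimit G)).inv := by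
    refine hF.hom_ext fun j => ?_
    rw [hm]
    simp only [IsColimit.comp_coconePointUniqueUpToIso_hom_assoc]
    show α.app j ≫ cG.ι.app j = colimit.ι F j ≫ colim.map α ≫ _
    rw [colimit.ι_map_assoc]
    congr 1
    exact (hG.comp_coconePointUniqueUpToIso_inv (colimit.isColimit G) j).symm
  rw [hiso]
  exact mono_comp _ _

end AuxAb

section AuxRigid

/-- For a morphism `η : 𝟙 ⟶ D` into an object with a chosen right dual, the right adjoint
mate of `η` agrees with the evident morphism `Dᘁ ⟶ 𝟙`. -/
lemma mate_eq {C : Type u} [Category.{v} C] [MonoidalCategory C]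
    {D : C} [HasRightDual D] (η : 𝟙_ C ⟶ D) :
    (ηᘁ : Dᘁ ⟶ 𝟙_ C) = (ρ_ (Dᘁ)).inv ≫ (Dᘁ ◁ η) ≫ ε_ D (Dᘁ) := by
  show (ρ_ (Dᘁ)).inv ≫ Dᘁ ◁ (ρ_ (𝟙_ C)).inv ≫ Dᘁ ◁ (η ▷ 𝟙_ C) ≫ (α_ (Dᘁ) D (𝟙_ C)).inv ≫
      (ε_ D (Dᘁ)) ▷ 𝟙_ C ≫ (λ_ (𝟙_ C)).hom = (ρ_ (Dᘁ)).inv ≫ (Dᘁ ◁ η) ≫ ε_ D (Dᘁ)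
  monoidal

/-- In a braided category, left tensoring is isomorphic to right tensoring. -/
noncomputable def tensorLeftIsoTensorRight {C : Type u} [Category.{v} C] [MonoidalCategory C]
    [BraidedCategory C] (X : C) : tensorLeft X ≅ tensorRight X :=
  NatIso.ofComponents (fun Y => β_ X Y) (by intros; simp)

/-- If the right adjoint mate of `η : 𝟙 ⟶ D` is an epimorphism, then `η ▷ X` is a
monomorphism for every `X`. -/
lemma mono_whiskerRight_unit {C : Type u} [Category.{v} C] [Abelian C] [MonoidalCategory C]
    [SymmetricCategory C] [MonoidalClosed C]
    {D : C} [HasRightDual D] (η : 𝟙_ C ⟶ D) (hη : Epi (ηᘁ)) (X : C) :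
    Mono (η ▷ X) := by
  set s : (Dᘁ : C) ⟶ 𝟙_ C := (ρ_ (Dᘁ)).inv ≫ (Dᘁ ◁ η) ≫ ε_ D (Dᘁ) with hs
  have hse : Epi s := by rw [hs, ← mate_eq]; exact hη
  rw [Preadditive.mono_iff_cancel_zero]
  intro W g hg
  haveI : (tensorLeft (Dᘁ)).IsLeftAdjoint := (ihom.adjunction (Dᘁ)).isLeftAdjoint
  have h0 : (Dᘁ) ◁ g ≫ (Dᘁ) ◁ (η ▷ X) = 0 := by
    rw [← MonoidalCategory.whiskerLeft_comp, hg]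
    exact (tensorLeft (Dᘁ)).map_zero _ _
  have key : (Dᘁ) ◁ (η ▷ X) ≫ (α_ (Dᘁ) D X).inv ≫ (ε_ D (Dᘁ)) ▷ X =
      (Dᘁ) ◁ (λ_ X).hom ≫ s ▷ X := by
    rw [hs]
    simp only [comp_whiskerRight, MonoidalCategory.whiskerLeft_comp]
    monoidal
  have h1 : (Dᘁ) ◁ (g ≫ (λ_ X).hom) ≫ s ▷ X = 0 := by
    rw [MonoidalCategory.whiskerLeft_comp, Category.assoc, ← key, ← Category.assoc, h0,
      zero_comp]
  rw [whisker_exchange] at h1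
  haveI : (tensorLeft W).IsLeftAdjoint := (ihom.adjunction W).isLeftAdjoint
  haveI : PreservesColimits (tensorRight W) :=
    preservesColimits_of_natIso (tensorLeftIsoTensorRight W)
  have hsW : Epi (s ▷ W) := preserves_epi_of_preservesColimit (tensorRight W) s
  have h2 : (𝟙_ C) ◁ (g ≫ (λ_ X).hom) = 0 := by
    rw [← cancel_epi (s ▷ W), h1, comp_zero]
  have h3 : g ≫ (λ_ X).hom = 0 := by
    have := MonoidalCategory.leftUnitor_naturality (g ≫ (λ_ X).hom)
    rw [h2, zero_comp] at this
    rw [← cancel_epi (λ_ W).hom, ← this, comp_zero]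
  rw [← Category.comp_id g, ← Iso.hom_inv_id (λ_ X), ← Category.assoc, h3, zero_comp]

end AuxRigid

section AuxAdams

variable {C : Type u} [Category.{v} C] [Abelian C] [MonoidalCategory C]
  [SymmetricCategory C] [MonoidalClosed C] [HasColimits C] [AB5 C]
  {A : C} {unit : 𝟙_ C ⟶ A}

/-- Tensoring (on the left) with the colimit of a filtered diagram of dualizable objects
preserves monomorphisms. -/
lemma AdamsDiagram.mono_whiskerLeft (P : AdamsDiagram.{v} C A unit)
    (hdual : ∀ j, HasRightDual (P.D.obj j)) (hc : IsColimit P.cocone)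
    {X Y : C} (f : X ⟶ Y) (hf : Mono f) : Mono (A ◁ f) := by
  haveI := hf
  letI : ∀ j, HasRightDual (P.D.obj j) := hdual
  -- the levelwise natural transformation
  let α : P.D ⋙ tensorRight X ⟶ P.D ⋙ tensorRight Y :=
    { app := fun j => (P.D.obj j) ◁ f
      naturality := fun j j' g => (whisker_exchange (P.D.map g) f).symm }
  have hα : ∀ j, Mono (α.app j) := by
    intro j
    haveI := Functor.preservesMonomorphisms_of_adjunction
      (tensorLeftAdjunction (P.D.obj j) ((P.D.obj j)ᘁ))
    exact (tensorLeft (P.D.obj j)).map_mono f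
  haveI : ∀ (Z : C), (tensorLeft Z).IsLeftAdjoint := fun Z => (ihom.adjunction Z).isLeftAdjoint
  haveI : PreservesColimits (tensorRight X) :=
    preservesColimits_of_natIso (tensorLeftIsoTensorRight X)
  haveI : PreservesColimits (tensorRight Y) :=
    preservesColimits_of_natIso (tensorLeftIsoTensorRight Y)
  exact mono_of_isColimit_of_mono α hα
    (isColimitOfPreserves (tensorRight X) hc) (isColimitOfPreserves (tensorRight Y) hc)
    (A ◁ f) (fun j => (whisker_exchange (P.ι j) f).symm)

/-- The unit map `𝟙 ⊗ X ⟶ A ⊗ X` of an Adams algebra is a monomorphism. -/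
lemma AdamsDiagram.mono_one_whiskerRight (P : AdamsDiagram.{v} C A unit) (hP : P.IsAdams)
    (X : C) : Mono (unit ▷ X) := by
  letI hdual : ∀ j, HasRightDual (P.D.obj j) := fun j => (hP.1 j).some
  obtain ⟨hc⟩ := hP.2.1
  let α : (Functor.const P.J).obj (𝟙_ C ⊗ X) ⟶ P.D ⋙ tensorRight X :=
    { app := fun j => (P.η j) ▷ X
      naturality := fun j j' g => by
        simp only [Functor.const_obj_obj, Functor.const_obj_map, Category.id_comp,
          Functor.comp_obj, Functor.comp_map]
        show P.η j' ▷ X = P.η j ▷ X ≫ P.D.map g ▷ X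
        rw [← comp_whiskerRight, P.η_nat g] }
  have hα : ∀ j, Mono (α.app j) :=
    fun j => mono_whiskerRight_unit (P.η j) (hP.2.2 j (hdual j)) X
  haveI : ∀ (Z : C), (tensorLeft Z).IsLeftAdjoint := fun Z => (ihom.adjunction Z).isLeftAdjoint
  haveI : PreservesColimits (tensorRight X) :=
    preservesColimits_of_natIso (tensorLeftIsoTensorRight X)
  exact mono_of_isColimit_of_mono α hα
    (myConstCoconeIsColimit P.J (𝟙_ C ⊗ X)) (isColimitOfPreserves (tensorRight X) hc)
    (unit ▷ X)
    (fun j => by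
      show 𝟙 _ ≫ unit ▷ X = (P.η j) ▷ X ≫ (P.ι j) ▷ X
      rw [Category.id_comp, ← comp_whiskerRight, P.η_unit j])

end AuxAdams

/-- An Adams algebra in an abelian tensor category with exact filtered colimits is
faithfully flat: tensoring with it is exact (it preserves finite limits, colimits
being automatic), and `A ⊗ X ≅ 0` implies `X ≅ 0`. -/
theorem adamsAlgebra_faithfullyFlat
    {C : Type u} [Category.{v} C] [Abelian C]
    [MonoidalCategory C] [SymmetricCategory C] [MonoidalClosed C]
    [HasColimits C] [AB5 C]
    (A : CommMon C) (P : AdamsDiagram.{v} C A.X (MonObj.one (X := A.X))) (hP : P.IsAdams) :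
    PreservesFiniteLimits (tensorLeft A.X) ∧
      ∀ X : C, IsZero (A.X ⊗ X) → IsZero X := by
  letI hdual : ∀ j, HasRightDual (P.D.obj j) := fun j => (hP.1 j).some
  obtain ⟨hc⟩ := hP.2.1
  constructor
  · -- flatness
    haveI : (tensorLeft A.X).IsLeftAdjoint := (ihom.adjunction A.X).isLeftAdjoint
    haveI : (tensorLeft A.X).PreservesMonomorphisms :=
      ⟨fun f hf => P.mono_whiskerLeft hdual hc f hf⟩
    haveI : (tensorLeft A.X).PreservesHomology :=
      Functor.preservesHomology_of_preservesMonos_and_cokernels _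
    haveI : ∀ {X Y : C} (f : X ⟶ Y), PreservesLimit (parallelPair f 0) (tensorLeft A.X) :=
      fun f => Functor.PreservesHomology.preservesKernel _ f
    exact Functor.preservesFiniteLimits_of_preservesKernels (tensorLeft A.X)
  · -- faithfulness
    intro X hX
    haveI hm : Mono (MonObj.one (X := A.X) ▷ X) := P.mono_one_whiskerRight hP X
    have h0 : (MonObj.one (X := A.X) ▷ X : 𝟙_ C ⊗ X ⟶ A.X ⊗ X) = 0 := hX.eq_of_tgt _ _
    have hz : IsZero (𝟙_ C ⊗ X) := by
      rw [IsZero.iff_id_eq_zero]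
      rw [← cancel_mono (MonObj.one (X := A.X) ▷ X), h0, Category.id_comp, comp_zero]
    exact hz.of_iso (λ_ X).symm
end

section
/- Let C be an abelian tensor category with exact filtered colimits and let η_i : 𝟙 → A_i exhibit the commutative algebra A as an Adams algebra. Then for each index i the diagram A_i^∨ ⊗ A_i^∨ ⇉ A_i^∨ → 𝟙, with parallel morphisms A_i^∨ ⊗ η_i^∨ and η_i^∨ ⊗ A_i^∨ and final morphism η_i^∨, is a coequalizer diagram. -/
set_option linter.unusedSectionVars false
set_option maxHeartbeats 800000


open CategoryTheory CategoryTheory.Limits MonoidalCategory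

universe w v u

section AuxAdams

variable {C : Type u} [Category.{v} C] [Abelian C]
    [MonoidalCategory C] [SymmetricCategory C] [MonoidalClosed C]

private lemma adams_epi_whiskerLeft (T : C) {X Y : C} (f : X ⟶ Y) [Epi f] : Epi (T ◁ f) := by
  haveI : (tensorLeft T).IsLeftAdjoint := (MonoidalClosed.closed T).adj.isLeftAdjoint
  exact (tensorLeft T).map_epi f

private lemma adams_epi_whiskerRight {X Y : C} (f : X ⟶ Y) [Epi f] (T : C) : Epi (f ▷ T) := by
  haveI := adams_epi_whiskerLeft T f
  have h : f ▷ T = (β_ X T).hom ≫ (T ◁ f) ≫ (β_ Y T).inv := by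
    rw [← BraidedCategory.braiding_naturality_left_assoc f T, Iso.hom_inv_id, Category.comp_id]
  rw [h]
  infer_instance

private lemma adams_eval_unit : ε_ (𝟙_ C) ((𝟙_ C)ᘁ) = (ρ_ (𝟙_ C)).hom := rfl

private lemma adams_coev_unit : η_ (𝟙_ C) ((𝟙_ C)ᘁ) = (ρ_ (𝟙_ C)).inv := rfl

private lemma adams_mono_whiskerRight {Y : C} [HasRightDual Y] (f : 𝟙_ C ⟶ Y)
    (hf : Epi (fᘁ)) (Z : C) : Mono (f ▷ Z) := by
  constructor
  intro T a b hab
  have key : ∀ t : T ⟶ 𝟙_ C ⊗ Z,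
      (Yᘁ ◁ (t ≫ (f ▷ Z))) ≫ (α_ (Yᘁ) Y Z).inv ≫ (ε_ Y (Yᘁ) ▷ Z) ≫ (λ_ Z).hom
        = ((fᘁ) ▷ T) ≫ (λ_ T).hom ≫ t ≫ (λ_ Z).hom := by
    intro t
    calc (Yᘁ ◁ (t ≫ (f ▷ Z))) ≫ (α_ (Yᘁ) Y Z).inv ≫ (ε_ Y (Yᘁ) ▷ Z) ≫ (λ_ Z).hom
        = (Yᘁ ◁ t) ≫ (α_ (Yᘁ) (𝟙_ C) Z).inv ≫
            ((((Yᘁ) ◁ f) ≫ ε_ Y (Yᘁ)) ▷ Z) ≫ (λ_ Z).hom := by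
          rw [MonoidalCategory.whiskerLeft_comp, Category.assoc,
            associator_inv_naturality_middle_assoc, comp_whiskerRight_assoc]
      _ = (Yᘁ ◁ t) ≫ (α_ (Yᘁ) (𝟙_ C) Z).inv ≫
            ((((fᘁ) ▷ (𝟙_ C)) ≫ (ρ_ (𝟙_ C)).hom) ▷ Z) ≫ (λ_ Z).hom := by
          rw [← rightAdjointMate_comp_evaluation, adams_eval_unit]
      _ = ((fᘁ) ▷ T) ≫ (λ_ T).hom ≫ t ≫ (λ_ Z).hom := by
          rw [comp_whiskerRight_assoc, whiskerRight_tensor_symm (rightAdjointMate f) (𝟙_ C) Z]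
          simp only [Iso.inv_hom_id_assoc, Category.assoc]
          rw [whisker_exchange_assoc]
          congr 1
          exact (by simp :
            (𝟙_ C) ◁ t ≫ (α_ (𝟙_ C) (𝟙_ C) Z).inv ≫ ((ρ_ (𝟙_ C)).hom ▷ Z) ≫ (λ_ Z).hom
              = (λ_ T).hom ≫ t ≫ (λ_ Z).hom)
  have h2 := (key a).symm.trans ((congrArg (fun u => (Yᘁ ◁ u) ≫ (α_ (Yᘁ) Y Z).inv ≫
      (ε_ Y (Yᘁ) ▷ Z) ≫ (λ_ Z).hom) hab).trans (key b))
  haveI : Epi ((rightAdjointMate f) ▷ T) := adams_epi_whiskerRight _ T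
  have h3 := (cancel_epi ((rightAdjointMate f) ▷ T)).mp h2
  have h4 := (cancel_epi (λ_ T).hom).mp h3
  exact (cancel_mono (λ_ Z).hom).mp h4


private lemma adams_whiskerLeft_zero (W : C) (X Y : C) : W ◁ (0 : X ⟶ Y) = 0 := by
  haveI : (tensorLeft W).IsLeftAdjoint := (MonoidalClosed.closed W).adj.isLeftAdjoint
  exact (tensorLeft W).map_zero X Y

/-- The coevaluation identity: `η_ ≫ (Y ◁ fᘁ) ≫ ρ = f` for `f : 𝟙 ⟶ Y`. -/
private lemma adams_coev_mate {Y : C} [HasRightDual Y] (f : 𝟙_ C ⟶ Y)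
    (e : (Yᘁ) ⟶ 𝟙_ C) (he : rightAdjointMate f = e) :
    η_ Y (Yᘁ) ≫ (Y ◁ e) ≫ (ρ_ Y).hom = f := by
  rw [← he, ← Category.assoc, coevaluation_comp_rightAdjointMate f, adams_coev_unit,
    Category.assoc]
  show (ρ_ (𝟙_ C)).inv ≫ f ▷ (𝟙_ C) ≫ (ρ_ Y).hom = f
  rw [MonoidalCategory.whiskerRight_id]
  simp

private lemma adams_w {X : C} (e : X ⟶ 𝟙_ C) :
    ((X ◁ e) ≫ (ρ_ X).hom) ≫ e = ((e ▷ X) ≫ (λ_ X).hom) ≫ e := by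
  have h1 : (ρ_ X).hom ≫ e = (e ▷ 𝟙_ C) ≫ (ρ_ (𝟙_ C)).hom := by simp
  have h2 : (λ_ X).hom ≫ e = ((𝟙_ C) ◁ e) ≫ (λ_ (𝟙_ C)).hom := by simp
  rw [Category.assoc, Category.assoc, h1, h2, whisker_exchange_assoc, unitors_equal]

/-- Any morphism coequalizing the pair kills the kernel of `e = fᘁ`. -/
private lemma adams_kernel_vanish {Y : C} [HasRightDual Y] (f : 𝟙_ C ⟶ Y)
    (e : (Yᘁ) ⟶ 𝟙_ C) (he : rightAdjointMate f = e) (hf : Epi (fᘁ))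
    {Z : C} (g : (Yᘁ) ⟶ Z)
    (hg : (((Yᘁ) ◁ e) ≫ (ρ_ (Yᘁ)).hom) ≫ g = ((e ▷ (Yᘁ)) ≫ (λ_ (Yᘁ)).hom) ≫ g) :
    kernel.ι e ≫ g = 0 := by
  haveI : Mono (f ▷ Z) := adams_mono_whiskerRight f hf Z
  have claim2 :
      ((λ_ (kernel e)).inv ≫ (η_ Y (Yᘁ) ▷ kernel e) ≫ ((Y ⊗ (Yᘁ)) ◁ kernel.ι e)) ≫
          (α_ Y (Yᘁ) (Yᘁ)).hom ≫ (Y ◁ (((e ▷ (Yᘁ)) ≫ (λ_ (Yᘁ)).hom) ≫ g))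
      = (kernel.ι e ≫ g) ≫ (λ_ Z).inv ≫ (f ▷ Z) := by
    calc ((λ_ (kernel e)).inv ≫ (η_ Y (Yᘁ) ▷ kernel e) ≫ ((Y ⊗ (Yᘁ)) ◁ kernel.ι e)) ≫
          (α_ Y (Yᘁ) (Yᘁ)).hom ≫ (Y ◁ (((e ▷ (Yᘁ)) ≫ (λ_ (Yᘁ)).hom) ≫ g))
        = (λ_ (kernel e)).inv ≫ (η_ Y (Yᘁ) ▷ kernel e) ≫ (α_ Y (Yᘁ) (kernel e)).hom ≫
            (Y ◁ (((Yᘁ) ◁ kernel.ι e) ≫ (e ▷ (Yᘁ)) ≫ (λ_ (Yᘁ)).hom ≫ g)) := by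
          simp only [Category.assoc, associator_naturality_right_assoc,
            MonoidalCategory.whiskerLeft_comp]
      _ = (λ_ (kernel e)).inv ≫ (η_ Y (Yᘁ) ▷ kernel e) ≫ (α_ Y (Yᘁ) (kernel e)).hom ≫
            (Y ◁ ((e ▷ kernel e) ≫ (λ_ (kernel e)).hom ≫ (kernel.ι e ≫ g))) := by
          rw [whisker_exchange_assoc, MonoidalCategory.id_whiskerLeft]
          simp [MonoidalCategory.whiskerLeft_comp]
      _ = (λ_ (kernel e)).inv ≫
            ((η_ Y (Yᘁ) ≫ (Y ◁ e) ≫ (ρ_ Y).hom) ▷ kernel e) ≫ (Y ◁ (kernel.ι e ≫ g)) := by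
          simp only [MonoidalCategory.whiskerLeft_comp, comp_whiskerRight, Category.assoc]
          rw [← associator_naturality_middle_assoc, MonoidalCategory.triangle_assoc]
      _ = (λ_ (kernel e)).inv ≫ (f ▷ kernel e) ≫ (Y ◁ (kernel.ι e ≫ g)) := by
          rw [adams_coev_mate f e he]
      _ = (kernel.ι e ≫ g) ≫ (λ_ Z).inv ≫ (f ▷ Z) := by
          rw [← whisker_exchange]
          rw [MonoidalCategory.id_whiskerLeft]
          simp
  have claim1 :
      ((λ_ (kernel e)).inv ≫ (η_ Y (Yᘁ) ▷ kernel e) ≫ ((Y ⊗ (Yᘁ)) ◁ kernel.ι e)) ≫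
          (α_ Y (Yᘁ) (Yᘁ)).hom ≫ (Y ◁ ((((Yᘁ) ◁ e) ≫ (ρ_ (Yᘁ)).hom) ≫ g))
      = 0 := by
    have hin : ((Yᘁ) ◁ kernel.ι e) ≫ ((((Yᘁ) ◁ e) ≫ (ρ_ (Yᘁ)).hom) ≫ g) = 0 := by
      rw [Category.assoc, ← MonoidalCategory.whiskerLeft_comp_assoc, kernel.condition,
        adams_whiskerLeft_zero, zero_comp]
    calc ((λ_ (kernel e)).inv ≫ (η_ Y (Yᘁ) ▷ kernel e) ≫ ((Y ⊗ (Yᘁ)) ◁ kernel.ι e)) ≫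
          (α_ Y (Yᘁ) (Yᘁ)).hom ≫ (Y ◁ ((((Yᘁ) ◁ e) ≫ (ρ_ (Yᘁ)).hom) ≫ g))
        = (λ_ (kernel e)).inv ≫ (η_ Y (Yᘁ) ▷ kernel e) ≫ (α_ Y (Yᘁ) (kernel e)).hom ≫
            (Y ◁ (((Yᘁ) ◁ kernel.ι e) ≫ ((((Yᘁ) ◁ e) ≫ (ρ_ (Yᘁ)).hom) ≫ g))) := by
          simp only [Category.assoc, associator_naturality_right_assoc,
            MonoidalCategory.whiskerLeft_comp]
      _ = 0 := by rw [hin, adams_whiskerLeft_zero, comp_zero, comp_zero, comp_zero]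
  have hzero : (kernel.ι e ≫ g) ≫ (λ_ Z).inv ≫ (f ▷ Z) = 0 := by
    rw [← claim2, ← hg]
    exact claim1
  have h5 : ((kernel.ι e ≫ g) ≫ (λ_ Z).inv) ≫ (f ▷ Z) = 0 ≫ (f ▷ Z) := by
    simpa [Category.assoc] using hzero
  have h6 := (cancel_mono (f ▷ Z)).mp h5
  have h7 : ((kernel.ι e ≫ g) ≫ (λ_ Z).inv) ≫ (λ_ Z).hom = 0 ≫ (λ_ Z).hom := by rw [h6]
  simpa using h7

end AuxAdams


/-- If `η j : 𝟙_ C ⟶ A j` exhibit `A` as an Adams algebra in an abelian tensor category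
with exact filtered colimits, then for each `j` the diagram
`Aⱼᘁ ⊗ Aⱼᘁ ⇉ Aⱼᘁ ⟶ 𝟙` (with parallel maps `Aⱼᘁ ◁ (η j)ᘁ` and `(η j)ᘁ ▷ Aⱼᘁ`, followed
by unitors, and final map `(η j)ᘁ`) is a coequalizer diagram. -/
theorem adamsAlgebra_dual_coequalizer
    {C : Type u} [Category.{v} C] [Abelian C]
    [MonoidalCategory C] [SymmetricCategory C] [MonoidalClosed C]
    [HasColimits C] [AB5 C]
    (A : CommMon C) (P : AdamsDiagram.{v} C A.X (MonObj.one (X := A.X))) (hP : P.IsAdams) :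
    ∀ (j : P.J) (h : HasRightDual (P.D.obj j)),
      letI := h
      ∃ w : (((P.D.obj j)ᘁ ◁ (P.η j)ᘁ) ≫ (ρ_ ((P.D.obj j)ᘁ)).hom) ≫ (P.η j)ᘁ =
          (((P.η j)ᘁ ▷ (P.D.obj j)ᘁ) ≫ (λ_ ((P.D.obj j)ᘁ)).hom) ≫ (P.η j)ᘁ,
        Nonempty (IsColimit (Cofork.ofπ ((P.η j)ᘁ) w)) := by
  intro j h
  letI := h
  haveI hf : Epi (rightAdjointMate (P.η j)) := hP.2.2 j h
  refine ⟨adams_w (rightAdjointMate (P.η j)), ⟨Cofork.IsColimit.mk _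
    (fun s => Abelian.epiDesc (rightAdjointMate (P.η j)) s.π
      (adams_kernel_vanish (P.η j) (rightAdjointMate (P.η j)) rfl hf s.π s.condition))
    (fun s => ?_) (fun s m hm => ?_)⟩⟩
  · simp only [Cofork.π_ofπ]
    exact Abelian.comp_epiDesc (rightAdjointMate (P.η j)) s.π _
  · apply (cancel_epi (rightAdjointMate (P.η j))).mp
    rw [Abelian.comp_epiDesc]
    simpa using hm
end

section
/- Let C be an abelian tensor category with exact filtered colimits in which the unit object 𝟙 is finitely presentable, and let A be a faithfully flat commutative algebra in C whose underlying object is a filtered colimit of dualizable objects. Then A is an Adams algebra: one can choose the filtered diagram A_i with unit factorizations η_i : 𝟙 → A_i such that each η_i^∨ : A_i^∨ → 𝟙 is an epimorphism. -/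
open CategoryTheory CategoryTheory.Limits MonoidalCategory

universe w v u

open Opposite in
/-- An object of a category is finitely presentable if its covariant hom functor
preserves filtered colimits. -/
def IsFinitelyPresentable {C : Type u} [Category.{v} C] (X : C) : Prop :=
  ∀ (J : Type v) [SmallCategory J] [IsFiltered J],
    PreservesColimitsOfShape J (coyoneda.obj (op X))

open scoped ZeroObject

/-- An exact conservative endofunctor of an abelian category reflects epimorphisms. -/
lemma epi_of_map_epi_aux {C : Type u} [Category.{v} C] [Abelian C]
    (F : C ⥤ C) [PreservesColimitsOfSize.{0, 0} F]
    [PreservesLimit (Functor.empty.{0} C) F]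
    [F.ReflectsIsomorphisms] {X Y : C} (f : X ⟶ Y) (h : Epi (F.map f)) : Epi f := by
  have h1 : IsZero (F.obj (cokernel f)) :=
    IsZero.of_iso (isZero_zero C) (PreservesCokernel.iso F f ≪≫ cokernel.ofEpi (F.map f))
  have h2 : IsZero (F.obj (0 : C)) :=
    (IsTerminal.isTerminalObj F _ ((isZero_zero C).isTerminal)).isZero
  set q : cokernel f ⟶ (0 : C) := 0 with hq
  have hFq : F.map q = (h1.iso h2).hom := h1.eq_of_src _ _
  have : IsIso (F.map q) := by rw [hFq]; infer_instance
  have : IsIso q := isIso_of_reflects_iso q F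
  have h3 : IsZero (cokernel f) := IsZero.of_iso (isZero_zero C) (asIso q)
  exact Abelian.epi_of_cokernel_π_eq_zero f (h3.eq_of_tgt _ _)

/-- The key split-epi computation: if `η : 𝟙 ⟶ P` with `P` dualizable factors the unit
of a monoid `M` via `ι : P ⟶ M.X`, then `M.X ◁ ηᘁ` is a split epimorphism. -/
lemma whiskerLeft_rightAdjointMate_isSplitEpi {C : Type u} [Category.{v} C]
    [MonoidalCategory C] (M : Mon C) {P : C} [HasRightDual P]
    (η : 𝟙_ C ⟶ P) (ι : P ⟶ M.X) (hηι : η ≫ ι = MonObj.one (X := M.X)) :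
    IsSplitEpi (M.X ◁ (η)ᘁ) := by
  have key : ((ρ_ M.X).inv ≫ (M.X ◁ η_ P (Pᘁ)) ≫ (α_ M.X P (Pᘁ)).inv ≫
      (((M.X ◁ ι) ≫ MonObj.mul (X := M.X)) ▷ (Pᘁ))) ≫ (M.X ◁ (η)ᘁ) = (ρ_ M.X).inv := by
    rw [Category.assoc, Category.assoc, Category.assoc, ← whisker_exchange]
    rw [← associator_inv_naturality_right_assoc, ← MonoidalCategory.whiskerLeft_comp_assoc,
      coevaluation_comp_rightAdjointMate]
    rw [MonoidalCategory.whiskerLeft_comp_assoc, associator_inv_naturality_middle_assoc,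
      ← comp_whiskerRight, ← Category.assoc (M.X ◁ η)]
    rw [← MonoidalCategory.whiskerLeft_comp, hηι, MonObj.mul_one]
    show (ρ_ M.X).inv ≫ (M.X ◁ η_ (𝟙_ C) (𝟙_ C)) ≫
        (α_ M.X (𝟙_ C) (𝟙_ C)).inv ≫ ((ρ_ M.X).hom ▷ (𝟙_ C)) = (ρ_ M.X).inv
    have h : η_ (𝟙_ C) (𝟙_ C) = (ρ_ (𝟙_ C)).inv := rfl
    rw [h]
    monoidal
  exact ⟨⟨⟨(ρ_ M.X).hom ≫ (ρ_ M.X).inv ≫ (M.X ◁ η_ P (Pᘁ)) ≫ (α_ M.X P (Pᘁ)).inv ≫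
      (((M.X ◁ ι) ≫ MonObj.mul (X := M.X)) ▷ (Pᘁ)), by
        rw [Category.assoc, key, Iso.hom_inv_id]⟩⟩⟩

/-- In an abelian tensor category with exact filtered colimits and finitely presentable
unit, a faithfully flat commutative algebra whose underlying object is a filtered
colimit of dualizable objects is an Adams algebra. -/
theorem faithfullyFlat_filteredColimitOfDuals_isAdams
    {C : Type u} [Category.{v} C] [Abelian C]
    [MonoidalCategory C] [SymmetricCategory C] [MonoidalClosed C]
    [HasColimits C] [AB5 C]
    (hunit : _root_.IsFinitelyPresentable (𝟙_ C))
    (A : CommMon C)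
    (hflat : PreservesFiniteLimits (tensorLeft A.X))
    (hcons : (tensorLeft A.X).ReflectsIsomorphisms)
    (J : Type v) [SmallCategory J] [IsFiltered J] (D : J ⥤ C)
    (hdual : ∀ j, Nonempty (HasRightDual (D.obj j)))
    (ι : ∀ j, D.obj j ⟶ A.X)
    (hι : ∀ {j j'} (f : j ⟶ j'), D.map f ≫ ι j' = ι j)
    (hcolim : Nonempty (IsColimit (Cocone.mk A.X
      { app := fun j => ι j
        naturality := by intro j j' f; simpa using hι f }))) :
    ∃ Q : AdamsDiagram.{v} C A.X (MonObj.one (X := A.X)), Q.IsAdams := by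
  obtain ⟨hc⟩ := hcolim
  haveI := hunit J
  obtain ⟨j₀, g, hg⟩ := Types.jointly_surjective _
    (isColimitOfPreserves (coyoneda.obj (Opposite.op (𝟙_ C))) hc) (MonObj.one (X := A.X))
  dsimp at hg
  refine ⟨{ J := Under j₀
            D := Under.forget j₀ ⋙ D
            η := fun u => g ≫ D.map u.hom
            ι := fun u => ι u.right
            ι_nat := fun {u u'} f => hι f.right
            η_nat := fun {u u'} f => by
              dsimp
              rw [Category.assoc, ← D.map_comp, Under.w f]
            η_unit := fun u => by
              have h1 : D.map u.hom ≫ ι u.right = ι j₀ := hι u.hom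
              exact (Category.assoc _ _ _).trans ((congrArg (fun k => g ≫ k) h1).trans hg) }, ?_, ?_, ?_⟩
  · exact fun u => hdual u.right
  · exact ⟨(Functor.Final.isColimitWhiskerEquiv (Under.forget j₀) _).symm hc⟩
  · intro u h
    letI : HasRightDual (D.obj u.right) := h
    have h1 : D.map u.hom ≫ ι u.right = ι j₀ := hι u.hom
    have hsplit := whiskerLeft_rightAdjointMate_isSplitEpi (P := D.obj u.right) A.toMon
      (g ≫ D.map u.hom) (ι u.right)
      (by exact (Category.assoc _ _ _).trans ((congrArg (fun k => g ≫ k) h1).trans hg))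
    haveI : PreservesColimitsOfSize.{0, 0} (tensorLeft A.X) :=
      preservesColimitsOfSize_shrink _
    haveI : PreservesFiniteLimits (tensorLeft A.X) := hflat
    refine epi_of_map_epi_aux (tensorLeft A.X) (rightAdjointMate (show 𝟙_ C ⟶ D.obj u.right from g ≫ D.map u.hom)) ?_
    change Epi (A.X ◁ _)
    exact hsplit.epi
end

section
/- Let R be a commutative ring containing ℚ, C an abelian tensor category over R with exact filtered colimits, M a dualizable object of C, and p : M → 𝟙 an epimorphism. Then for every i ≥ 0 the induced morphism on symmetric-group fixed points (p^{⊗i})^{Σ_i} : (M^{⊗i})^{Σ_i} → (𝟙^{⊗i})^{Σ_i} is an epimorphism. -/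
open CategoryTheory CategoryTheory.Limits MonoidalCategory

universe v u

variable {C : Type u} [Category.{v} C] [MonoidalCategory C]

/-- The `n`-fold tensor power of an object, left-normalized. -/
def tensorPow (X : C) : ℕ → C
  | 0 => 𝟙_ C
  | n + 1 => tensorPow X n ⊗ X

/-- The `n`-fold tensor power of a morphism. -/
def tensorPowMap {X Y : C} (f : X ⟶ Y) : ∀ n, tensorPow X n ⟶ tensorPow Y n
  | 0 => 𝟙 _
  | n + 1 => tensorPowMap f n ⊗ₘ f

/-- The automorphism of `X^{⊗ n}` permuting the tensor factors in positions
`k` and `k + 1` (`0`-indexed), induced by the braiding; the identity when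
`k + 1 ≥ n`. -/
def swapTensorFactors [BraidedCategory C] (X : C) : (n k : ℕ) → (tensorPow X n ≅ tensorPow X n)
  | 0, _ => Iso.refl _
  | 1, _ => Iso.refl _
  | n + 2, k =>
    if k = n then
      α_ (tensorPow X n) X X ≪≫ whiskerLeftIso (tensorPow X n) (β_ X X) ≪≫
        (α_ (tensorPow X n) X X).symm
    else
      whiskerRightIso (swapTensorFactors X (n + 1) k) X

/-- `m : F ⟶ X` exhibits `F` as the object of fixed points of the action `ρ` of a group
`G` on `X`. -/
structure IsFixedPoints {G : Type*} [Group G] {X : C} (ρ : G →* Aut X)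
    (F : C) (m : F ⟶ X) : Prop where
  comm : ∀ g : G, m ≫ (ρ g).hom = m
  lift : ∀ {W : C} (f : W ⟶ X), (∀ g : G, f ≫ (ρ g).hom = f) →
    ∃! l : W ⟶ F, l ≫ m = f

section Auxiliary

/-- The inclusion of fixed points is a monomorphism. -/
theorem IsFixedPoints.mono {G : Type*} [Group G] {X F : C} {ρ : G →* Aut X}
    {m : F ⟶ X} (h : IsFixedPoints ρ F m) : Mono m := by
  constructor
  intro W a b hab
  have hcomm : ∀ g : G, (a ≫ m) ≫ (ρ g).hom = a ≫ m := fun g => by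
    rw [Category.assoc, h.comm]
  obtain ⟨l, -, hu⟩ := h.lift (a ≫ m) hcomm
  rw [hu a rfl, hu b hab.symm]

/-- Over a `ℚ`-algebra, the fixed points of a finite group action are a retract,
with retraction induced by the averaging idempotent. -/
theorem IsFixedPoints.retraction (R : Type*) [CommRing R] [Algebra ℚ R]
    {C : Type u} [Category.{v} C] [Preadditive C] [Linear R C]
    {G : Type*} [Group G] [Fintype G] {X F : C} {ρ : G →* Aut X}
    {m : F ⟶ X} (h : IsFixedPoints ρ F m) :
    ∃ r : X ⟶ F,
      r ≫ m = (algebraMap ℚ R ((Fintype.card G : ℚ)⁻¹)) • ∑ g : G, (ρ g).hom ∧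
      m ≫ r = 𝟙 F := by
  set c : R := algebraMap ℚ R ((Fintype.card G : ℚ)⁻¹) with hc
  set e : X ⟶ X := c • ∑ g : G, (ρ g).hom with he
  have hcard : (Fintype.card G : ℚ) ≠ 0 := by
    exact_mod_cast Fintype.card_ne_zero
  -- the averaging map is invariant
  have hinv : ∀ g : G, e ≫ (ρ g).hom = e := by
    intro g
    rw [he, Linear.smul_comp, Preadditive.sum_comp]
    congr 1
    refine Fintype.sum_equiv (Equiv.mulLeft g) _ _ (fun σ => ?_)
    show (ρ σ).hom ≫ (ρ g).hom = (ρ (g * σ)).hom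
    rw [map_mul]; rfl
  obtain ⟨r, hr, -⟩ := h.lift e hinv
  -- `m ≫ e = m`
  have hme : m ≫ e = m := by
    rw [he, Linear.comp_smul, Preadditive.comp_sum]
    have : ∀ g : G, m ≫ (ρ g).hom = m := h.comm
    rw [Finset.sum_congr rfl (fun g _ => this g), Finset.sum_const,
      Finset.card_univ, ← Nat.cast_smul_eq_nsmul R, smul_smul, hc]
    have : (Fintype.card G : R) = algebraMap ℚ R (Fintype.card G : ℚ) := by
      simp
    rw [this, ← map_mul, inv_mul_cancel₀ hcard, map_one, one_smul]
  refine ⟨r, hr, ?_⟩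
  obtain ⟨l, -, hu⟩ := h.lift m h.comm
  have h1 := hu (m ≫ r) (by simp only [Category.assoc, hr, hme])
  have h2 := hu (𝟙 F) (by simp)
  rw [h1, ← h2]

/-- In a symmetric monoidal closed category, tensoring preserves epimorphisms,
hence the tensor power of an epimorphism is an epimorphism. -/
theorem tensorPowMap_epi [SymmetricCategory C] [MonoidalClosed C]
    {X Y : C} (f : X ⟶ Y) [Epi f] (n : ℕ) : Epi (tensorPowMap f n) := by
  induction n with
  | zero => exact inferInstanceAs (Epi (𝟙 _))
  | succ n ih =>
    have hwl : ∀ (Z : C) {A B : C} (g : A ⟶ B), Epi g → Epi (Z ◁ g) := by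
      intro Z A B g hg
      haveI := hg
      haveI : (tensorLeft Z).IsLeftAdjoint := (ihom.adjunction Z).isLeftAdjoint
      exact (tensorLeft Z).map_epi g
    have hwr : ∀ (Z : C) {A B : C} (g : A ⟶ B), Epi g → Epi (g ▷ Z) := by
      intro Z A B g hg
      have : g ▷ Z = (β_ A Z).hom ≫ Z ◁ g ≫ (β_ B Z).inv := by
        rw [← Category.assoc, ← BraidedCategory.braiding_naturality_left,
          Category.assoc, Iso.hom_inv_id, Category.comp_id]
      rw [this]
      haveI := hwl Z g hg
      exact epi_comp _ _
    show Epi (tensorPowMap f n ⊗ₘ f)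
    rw [MonoidalCategory.tensorHom_def]
    haveI := hwr X (tensorPowMap f n) ih
    haveI := hwl (tensorPow Y n) f ‹Epi f›
    exact epi_comp _ _

end Auxiliary

/-- Over a `ℚ`-algebra `R`, for an `R`-linear abelian tensor category `C` with exact
filtered colimits, a dualizable object `M` and an epimorphism `p : M ⟶ 𝟙`, the induced
morphism `(p^{⊗ i})^{Σ_i} : (M^{⊗ i})^{Σ_i} ⟶ (𝟙^{⊗ i})^{Σ_i}` on fixed points of the
symmetric group actions (which permute the tensor factors via the braiding) is an
epimorphism, for every `i`. -/
theorem fixedPoints_map_epi_of_epi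
    (R : Type*) [CommRing R] [Algebra ℚ R]
    {C : Type u} [Category.{v} C] [Abelian C] [Linear R C]
    [MonoidalCategory C] [SymmetricCategory C] [MonoidalClosed C]
    [MonoidalPreadditive C] [MonoidalLinear R C] [HasColimits C] [AB5 C]
    (M : C) [HasRightDual M] (p : M ⟶ 𝟙_ C) [Epi p] (i : ℕ)
    -- the symmetric group actions permuting the tensor factors
    (ρM : Equiv.Perm (Fin i) →* Aut (tensorPow M i))
    (hρM : ∀ (k : ℕ) (hk : k + 1 < i),
      ρM (Equiv.swap ⟨k, Nat.lt_of_succ_lt hk⟩ ⟨k + 1, hk⟩) = swapTensorFactors M i k)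
    (ρ1 : Equiv.Perm (Fin i) →* Aut (tensorPow (𝟙_ C) i))
    (hρ1 : ∀ (k : ℕ) (hk : k + 1 < i),
      ρ1 (Equiv.swap ⟨k, Nat.lt_of_succ_lt hk⟩ ⟨k + 1, hk⟩) = swapTensorFactors (𝟙_ C) i k)
    (hequiv : ∀ σ : Equiv.Perm (Fin i),
      (ρM σ).hom ≫ tensorPowMap p i = tensorPowMap p i ≫ (ρ1 σ).hom)
    -- the fixed points of the two actions
    (FM : C) (mM : FM ⟶ tensorPow M i) (hFM : IsFixedPoints ρM FM mM)
    (F1 : C) (m1 : F1 ⟶ tensorPow (𝟙_ C) i) (hF1 : IsFixedPoints ρ1 F1 m1) :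
    -- the induced morphism on fixed points is an epimorphism
    ∀ l : FM ⟶ F1, l ≫ m1 = mM ≫ tensorPowMap p i → Epi l := by
  intro l hl
  haveI : Mono m1 := hF1.mono
  obtain ⟨rM, hrM, -⟩ := hFM.retraction R
  obtain ⟨r1, hr1, hr1'⟩ := hF1.retraction R
  haveI : Epi (tensorPowMap p i) := tensorPowMap_epi p i
  -- the retraction `r1` is a split epimorphism
  haveI : IsSplitEpi r1 := ⟨⟨⟨m1, hr1'⟩⟩⟩
  -- key commutation: `rM ≫ l = tensorPowMap p i ≫ r1`
  have key : rM ≫ l = tensorPowMap p i ≫ r1 := by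
    rw [← cancel_mono m1, Category.assoc, Category.assoc, hl, hr1, ← Category.assoc,
      hrM, Linear.smul_comp, Linear.comp_smul, Preadditive.sum_comp, Preadditive.comp_sum]
    congr 1
    exact Finset.sum_congr rfl fun σ _ => hequiv σ
  have : Epi (rM ≫ l) := by
    rw [key]; exact epi_comp _ _
  exact epi_of_epi rM l
end
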